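/- arXiv:2402.17756 — 2 statements merged into one kernel-verified Lean document; each statement's English description precedes it below -/
import Mathlib

section
/- Let D be a joint distribution of (x,y) ∈ ℝ^d × ℝ and let y* = u*(w*·x) for a fixed (a,b)-unbounded u* and w* ∈ ℝ^d. Fix w^t ∈ ℝ^d and let u^t minimize E[(u(w^t·x) - y)²] over the class U_{(a,b)}, and let u^{*t} minimize E[(u(w^t·x) - y*)²] over U_{(a,b)}. Then E_x[(u^t(w^t·x) - u^{*t}(w^t·x))²] ≤ OPT, where OPT = E[(y - y*)²]. -/
open MeasureTheory
open scoped RealInnerProductSpace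

/-- An `(a,b)`-unbounded activation. -/
def IsUnboundedActivation (a b : ℝ) (u : ℝ → ℝ) : Prop :=
  u 0 = 0 ∧ Monotone u ∧ LipschitzWith (Real.toNNReal b) u ∧
    ∀ z z' : ℝ, 0 ≤ z' → z' ≤ z → a * (z - z') ≤ u z - u z'

lemma l2_mul_integrable {α : Type*} [MeasurableSpace α] {μ : Measure α} {f g : α → ℝ}
    (hf : MemLp f 2 μ) (hg : MemLp g 2 μ) : Integrable (fun x => f x * g x) μ := by
  have h : MemLp (g • f) 1 μ := hf.smul hg (hpqr := ⟨by simp [ENNReal.inv_two_add_inv_two]⟩)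
  rw [← memLp_one_iff_integrable]
  have he : (fun x => f x * g x) = g • f := by ext x; simp [mul_comm]
  rw [he]; exact h

lemma combo_act {a b : ℝ} (hb : 0 ≤ b) {u v : ℝ → ℝ} (hu : IsUnboundedActivation a b u)
    (hv : IsUnboundedActivation a b v) {t : ℝ} (ht0 : 0 ≤ t) (ht1 : t ≤ 1) :
    IsUnboundedActivation a b (fun z => u z + t * (v z - u z)) := by
  obtain ⟨hu0, humono, hulip, hua⟩ := hu
  obtain ⟨hv0, hvmono, hvlip, hva⟩ := hv
  refine ⟨by simp [hu0, hv0], ?_, ?_, ?_⟩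
  · intro z' z h
    have h1 := humono h
    have h2 := hvmono h
    simp only []
    nlinarith [mul_le_mul_of_nonneg_left (sub_le_sub h2 h1) ht0]
  · refine LipschitzWith.of_dist_le_mul fun x y => ?_
    have h1 := hulip.dist_le_mul x y
    have h2 := hvlip.dist_le_mul x y
    simp only [Real.dist_eq, Real.coe_toNNReal b hb] at h1 h2 ⊢
    have key : u x + t * (v x - u x) - (u y + t * (v y - u y)) =
        (1 - t) * (u x - u y) + t * (v x - v y) := by ring
    rw [key]
    refine (abs_add_le _ _).trans ?_
    rw [abs_mul, abs_mul, abs_of_nonneg ht0, abs_of_nonneg (by linarith : (0:ℝ) ≤ 1 - t)]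
    nlinarith [mul_le_mul_of_nonneg_left h1 (by linarith : (0:ℝ) ≤ 1 - t),
      mul_le_mul_of_nonneg_left h2 ht0]
  · intro z z' hz' hzz'
    have h1 := hua z z' hz' hzz'
    have h2 := hva z z' hz' hzz'
    simp only []
    nlinarith [mul_le_mul_of_nonneg_left h1 (by linarith : (0:ℝ) ≤ 1 - t),
      mul_le_mul_of_nonneg_left h2 ht0]


lemma variational {α : Type*} [MeasurableSpace α] {μ : Measure α} {f g y : α → ℝ}
    (hf : MemLp f 2 μ) (hg : MemLp g 2 μ) (hy : MemLp y 2 μ)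
    (hmin : ∀ t : ℝ, 0 < t → t ≤ 1 →
      ∫ x, (f x - y x) ^ 2 ∂μ ≤ ∫ x, (f x + t * (g x - f x) - y x) ^ 2 ∂μ) :
    0 ≤ ∫ x, (f x - y x) * (g x - f x) ∂μ := by
  set I := ∫ x, (f x - y x) * (g x - f x) ∂μ with hI
  set A := ∫ x, (g x - f x) ^ 2 ∂μ with hA
  have hfy : MemLp (fun x => f x - y x) 2 μ := hf.sub hy
  have hgf : MemLp (fun x => g x - f x) 2 μ := hg.sub hf
  have int1 : Integrable (fun x => (f x - y x) ^ 2) μ := by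
    simpa [pow_two] using l2_mul_integrable hfy hfy
  have int2 : Integrable (fun x => (f x - y x) * (g x - f x)) μ :=
    l2_mul_integrable hfy hgf
  have int3 : Integrable (fun x => (g x - f x) ^ 2) μ := by
    simpa [pow_two] using l2_mul_integrable hgf hgf
  have expand : ∀ t : ℝ, ∫ x, (f x + t * (g x - f x) - y x) ^ 2 ∂μ =
      (∫ x, (f x - y x) ^ 2 ∂μ) + (2 * t) * I + t ^ 2 * A := by
    intro t
    have he : (fun x => (f x + t * (g x - f x) - y x) ^ 2) =
        fun x => (f x - y x) ^ 2 + (2 * t) * ((f x - y x) * (g x - f x))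
          + t ^ 2 * ((g x - f x) ^ 2) := by
      ext x; ring
    have int12 : Integrable (fun x => (f x - y x) ^ 2
        + 2 * t * ((f x - y x) * (g x - f x))) μ := int1.add (int2.const_mul (2 * t))
    have int2' : Integrable (fun x => 2 * t * ((f x - y x) * (g x - f x))) μ :=
      int2.const_mul (2 * t)
    have int3' : Integrable (fun x => t ^ 2 * (g x - f x) ^ 2) μ := int3.const_mul (t ^ 2)
    rw [he, integral_add int12 int3', integral_add int1 int2',
      integral_const_mul, integral_const_mul]
  have hAnn : 0 ≤ A := integral_nonneg fun x => sq_nonneg _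
  have key : ∀ t : ℝ, 0 < t → t ≤ 1 → 0 ≤ 2 * t * I + t ^ 2 * A := by
    intro t ht0 ht1
    have := hmin t ht0 ht1
    rw [expand t] at this
    linarith
  by_contra hneg
  push_neg at hneg
  rcases eq_or_lt_of_le hAnn with hA0 | hApos
  · have := key 1 one_pos le_rfl
    nlinarith
  · have ht0 : 0 < min 1 (-I / A) := lt_min one_pos (div_pos (by linarith) hApos)
    have hkey := key _ ht0 (min_le_left _ _)
    have hle : min 1 (-I / A) ≤ -I / A := min_le_right _ _
    set t := min 1 (-I / A) with htdef
    have htA : t * A ≤ -I := by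
      have h := mul_le_mul_of_nonneg_right hle hApos.le
      rwa [div_mul_cancel₀ _ (ne_of_gt hApos)] at h
    nlinarith [mul_le_mul_of_nonneg_left htA ht0.le, mul_pos ht0 (neg_pos.2 hneg)]

/-- **Closeness of population-optimal activations.** If `uₜ` minimizes
`E[(u (wₜ·x) - y)²]` and `uₜ*` minimizes `E[(u (wₜ·x) - y*)²]` over `U_{(a,b)}`,
where `y* = u*(w*·x)`, then `E[(uₜ(wₜ·x) - uₜ*(wₜ·x))²] ≤ OPT = E[(y - y*)²]`. -/
theorem population_optimal_activations_close
    {d : ℕ} (a b : ℝ) (ha : 0 < a) (hab : a ≤ b)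
    (D : Measure (EuclideanSpace ℝ (Fin d) × ℝ)) [IsProbabilityMeasure D]
    (hy : MemLp (fun p : EuclideanSpace ℝ (Fin d) × ℝ => p.2) 2 D)
    (ustar : ℝ → ℝ) (hustar : IsUnboundedActivation a b ustar)
    (wstar wt : EuclideanSpace ℝ (Fin d))
    (hystar : MemLp (fun p : EuclideanSpace ℝ (Fin d) × ℝ => ustar ⟪wstar, p.1⟫) 2 D)
    (ut : ℝ → ℝ) (hut : IsUnboundedActivation a b ut)
    (hutL2 : MemLp (fun p : EuclideanSpace ℝ (Fin d) × ℝ => ut ⟪wt, p.1⟫) 2 D)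
    (hutmin : ∀ u : ℝ → ℝ, IsUnboundedActivation a b u →
      ∫ p, (ut ⟪wt, p.1⟫ - p.2) ^ 2 ∂D ≤ ∫ p, (u ⟪wt, p.1⟫ - p.2) ^ 2 ∂D)
    (ust : ℝ → ℝ) (hust : IsUnboundedActivation a b ust)
    (hustL2 : MemLp (fun p : EuclideanSpace ℝ (Fin d) × ℝ => ust ⟪wt, p.1⟫) 2 D)
    (hustmin : ∀ u : ℝ → ℝ, IsUnboundedActivation a b u →
      ∫ p, (ust ⟪wt, p.1⟫ - ustar ⟪wstar, p.1⟫) ^ 2 ∂D ≤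
        ∫ p, (u ⟪wt, p.1⟫ - ustar ⟪wstar, p.1⟫) ^ 2 ∂D) :
    ∫ p, (ut ⟪wt, p.1⟫ - ust ⟪wt, p.1⟫) ^ 2 ∂D ≤
      ∫ p, (p.2 - ustar ⟪wstar, p.1⟫) ^ 2 ∂D := by
  have hb : (0:ℝ) ≤ b := ha.le.trans hab
  -- variational inequalities
  have hI1 : 0 ≤ ∫ p, (ut ⟪wt, p.1⟫ - p.2) * (ust ⟪wt, p.1⟫ - ut ⟪wt, p.1⟫) ∂D := by
    refine variational hutL2 hustL2 hy fun t ht0 ht1 => ?_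
    have := hutmin _ (combo_act hb hut hust ht0.le ht1)
    simpa using this
  have hI2 : 0 ≤ ∫ p, (ust ⟪wt, p.1⟫ - ustar ⟪wstar, p.1⟫) *
      (ut ⟪wt, p.1⟫ - ust ⟪wt, p.1⟫) ∂D := by
    refine variational hustL2 hutL2 hystar fun t ht0 ht1 => ?_
    have := hustmin _ (combo_act hb hust hut ht0.le ht1)
    simpa using this
  -- L² memberships of differences
  have hFG : MemLp (fun p : EuclideanSpace ℝ (Fin d) × ℝ =>
      ut ⟪wt, p.1⟫ - ust ⟪wt, p.1⟫) 2 D := hutL2.sub hustL2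
  have hYZ : MemLp (fun p : EuclideanSpace ℝ (Fin d) × ℝ =>
      p.2 - ustar ⟪wstar, p.1⟫) 2 D := hy.sub hystar
  have intA : Integrable (fun p : EuclideanSpace ℝ (Fin d) × ℝ =>
      (ut ⟪wt, p.1⟫ - ust ⟪wt, p.1⟫) ^ 2) D := by
    simpa [pow_two] using l2_mul_integrable hFG hFG
  have intB : Integrable (fun p : EuclideanSpace ℝ (Fin d) × ℝ =>
      (p.2 - ustar ⟪wstar, p.1⟫) ^ 2) D := by
    simpa [pow_two] using l2_mul_integrable hYZ hYZ
  have intC : Integrable (fun p : EuclideanSpace ℝ (Fin d) × ℝ =>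
      (ut ⟪wt, p.1⟫ - ust ⟪wt, p.1⟫) * (p.2 - ustar ⟪wstar, p.1⟫)) D :=
    l2_mul_integrable hFG hYZ
  have int_a : Integrable (fun p : EuclideanSpace ℝ (Fin d) × ℝ =>
      (ut ⟪wt, p.1⟫ - p.2) * (ust ⟪wt, p.1⟫ - ut ⟪wt, p.1⟫)) D :=
    l2_mul_integrable (hutL2.sub hy) (hustL2.sub hutL2)
  have int_b : Integrable (fun p : EuclideanSpace ℝ (Fin d) × ℝ =>
      (ust ⟪wt, p.1⟫ - ustar ⟪wstar, p.1⟫) * (ut ⟪wt, p.1⟫ - ust ⟪wt, p.1⟫)) D :=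
    l2_mul_integrable (hustL2.sub hystar) (hutL2.sub hustL2)
  set A := ∫ p, (ut ⟪wt, p.1⟫ - ust ⟪wt, p.1⟫) ^ 2 ∂D with hAdef
  set B := ∫ p, (p.2 - ustar ⟪wstar, p.1⟫) ^ 2 ∂D with hBdef
  set C := ∫ p, (ut ⟪wt, p.1⟫ - ust ⟪wt, p.1⟫) * (p.2 - ustar ⟪wstar, p.1⟫) ∂D with hCdef
  have sum_eq : (∫ p, (ut ⟪wt, p.1⟫ - p.2) * (ust ⟪wt, p.1⟫ - ut ⟪wt, p.1⟫) ∂D) +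
      (∫ p, (ust ⟪wt, p.1⟫ - ustar ⟪wstar, p.1⟫) * (ut ⟪wt, p.1⟫ - ust ⟪wt, p.1⟫) ∂D) =
      -A + C := by
    have intAneg : Integrable (fun p : EuclideanSpace ℝ (Fin d) × ℝ =>
        -((ut ⟪wt, p.1⟫ - ust ⟪wt, p.1⟫) ^ 2)) D := intA.neg
    rw [hAdef, hCdef, ← integral_add int_a int_b, ← integral_neg, ← integral_add intAneg intC]
    exact integral_congr_ae (Filter.Eventually.of_forall fun p => by ring)
  have hAC : A ≤ C := by linarith [hI1, hI2, sum_eq]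
  have h2nn : (0:ℝ) ≤ ∫ p, ((ut ⟪wt, p.1⟫ - ust ⟪wt, p.1⟫) -
      (p.2 - ustar ⟪wstar, p.1⟫)) ^ 2 ∂D := integral_nonneg fun p => sq_nonneg _
  have expand2 : ∫ p, ((ut ⟪wt, p.1⟫ - ust ⟪wt, p.1⟫) -
      (p.2 - ustar ⟪wstar, p.1⟫)) ^ 2 ∂D = A + (-2) * C + B := by
    have he : (fun p : EuclideanSpace ℝ (Fin d) × ℝ => ((ut ⟪wt, p.1⟫ - ust ⟪wt, p.1⟫) -
        (p.2 - ustar ⟪wstar, p.1⟫)) ^ 2) = fun p =>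
        (ut ⟪wt, p.1⟫ - ust ⟪wt, p.1⟫) ^ 2 +
          (-2) * ((ut ⟪wt, p.1⟫ - ust ⟪wt, p.1⟫) * (p.2 - ustar ⟪wstar, p.1⟫)) +
          (p.2 - ustar ⟪wstar, p.1⟫) ^ 2 := by
      ext p; ring
    have int12 : Integrable (fun p : EuclideanSpace ℝ (Fin d) × ℝ =>
        (ut ⟪wt, p.1⟫ - ust ⟪wt, p.1⟫) ^ 2 +
          (-2) * ((ut ⟪wt, p.1⟫ - ust ⟪wt, p.1⟫) * (p.2 - ustar ⟪wstar, p.1⟫))) D :=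
      intA.add (intC.const_mul _)
    rw [he, integral_add int12 intB, integral_add intA (intC.const_mul _), integral_const_mul]
  linarith [hAC, h2nn, expand2]
end

section
/- Let z₁ ≤ z₂ ≤ ⋯ ≤ z_m be reals with z_k = 0 for some index k, and let y*₁ ≤ ⋯ ≤ y*_m be reals with y*_k-related structure given by y*_i = u*(z*_i) for a non-decreasing function. Let (ŷ₁,…,ŷ_m) minimize Σᵢ(ỹᵢ - y*ᵢ)² subject to: ỹ_{i+1} - ỹᵢ ≥ 0 for 1 ≤ i ≤ k-1; ỹ_{i+1} - ỹᵢ ≥ a(z_{i+1} - zᵢ) for k ≤ i ≤ m-1; ỹ_{i+1} - ỹᵢ ≤ b(z_{i+1} - zᵢ) for all 1 ≤ i ≤ m-1; and ỹ_k = 0. Then for any function f : ℝ → ℝ with f(0) = 0, f(α₁) - f(α₂) ≤ (α₁ - α₂)/a for all α₁ ≥ α₂ ≥ 0, and f(α₁) - f(α₂) ≥ (α₁ - α₂)/b for all α₁ ≥ α₂, it holds that Σᵢ (ŷᵢ - y*ᵢ)(zᵢ - f(ŷᵢ)) ≥ 0. -/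
/-- Feasibility for the shape-constrained isotonic least-squares program:
`t k = 0`; `t` is non-decreasing on indices `1,…,k`; increments grow at rate at
least `a` above index `k`; and all increments are at most `b` times those of
`z` (indices run from `1` to `m`). -/
def Feasible (m k : ℕ) (a b : ℝ) (z t : ℕ → ℝ) : Prop :=
  t k = 0 ∧
  (∀ i, 1 ≤ i → i < k → 0 ≤ t (i + 1) - t i) ∧
  (∀ i, k ≤ i → i < m → a * (z (i + 1) - z i) ≤ t (i + 1) - t i) ∧
  (∀ i, 1 ≤ i → i < m → t (i + 1) - t i ≤ b * (z (i + 1) - z i))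

/-- If a slack `s` is nonnegative, and the perturbation coefficient `c` is
nonnegative whenever the constraint is active (`s = 0`), then the constraint
survives a sufficiently small nonnegative perturbation. -/
lemma aux_eps (s c : ℝ) (hs : 0 ≤ s) (h0 : s = 0 → 0 ≤ c) :
    ∃ e : ℝ, 0 < e ∧ ∀ ε : ℝ, 0 ≤ ε → ε ≤ e → 0 ≤ s + ε * c := by
  rcases le_or_gt 0 c with hc | hc
  · exact ⟨1, one_pos, fun ε hε _ => by nlinarith⟩
  · have hs' : 0 < s := by
      rcases eq_or_lt_of_le hs with h | h
      · exfalso; have := h0 h.symm; linarith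
      · exact h
    refine ⟨s / (-c), div_pos hs' (by linarith), fun ε hε hεe => ?_⟩
    have h1 : ε * (-c) ≤ s / (-c) * (-c) :=
      mul_le_mul_of_nonneg_right hεe (by linarith)
    rw [div_mul_cancel₀ _ (by linarith : (-c) ≠ 0)] at h1
    nlinarith

/-- **KKT positivity lemma.** The residuals of the shape-constrained
least-squares fit `ŷ` are non-negatively correlated with `zᵢ - f(ŷᵢ)` for any
approximate inverse `f` whose slope lies between `1/b` and `1/a`. -/
theorem kkt_positivity
    (m k : ℕ) (hk1 : 1 ≤ k) (hkm : k ≤ m)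
    (a b : ℝ) (ha : 0 < a) (hab : a ≤ b)
    (z ystar yhat : ℕ → ℝ)
    (hzmono : ∀ i j, 1 ≤ i → i ≤ j → j ≤ m → z i ≤ z j)
    (hzk : z k = 0)
    (hymono : ∀ i j, 1 ≤ i → i ≤ j → j ≤ m → ystar i ≤ ystar j)
    (hfeas : Feasible m k a b z yhat)
    (hmin : ∀ t : ℕ → ℝ, Feasible m k a b z t →
      ∑ i ∈ Finset.Icc 1 m, (yhat i - ystar i) ^ 2 ≤
        ∑ i ∈ Finset.Icc 1 m, (t i - ystar i) ^ 2)
    (f : ℝ → ℝ) (hf0 : f 0 = 0)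
    (hfa : ∀ α₁ α₂ : ℝ, 0 ≤ α₂ → α₂ ≤ α₁ → f α₁ - f α₂ ≤ (α₁ - α₂) / a)
    (hfb : ∀ α₁ α₂ : ℝ, α₂ ≤ α₁ → (α₁ - α₂) / b ≤ f α₁ - f α₂) :
    0 ≤ ∑ i ∈ Finset.Icc 1 m, (yhat i - ystar i) * (z i - f (yhat i)) := by
  classical
  obtain ⟨hyk, hA, hB, hC⟩ := hfeas
  have hm1 : 1 ≤ m := hk1.trans hkm
  have hb0 : 0 < b := lt_of_lt_of_le ha hab
  set d : ℕ → ℝ := fun i => z i - f (yhat i) with hd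
  have hdk : d k = 0 := by simp [hd, hzk, hyk, hf0]
  have hzinc : ∀ i, 1 ≤ i → i < m → 0 ≤ z (i + 1) - z i := by
    intro i h1 h2
    have := hzmono i (i + 1) h1 (Nat.le_succ i) h2
    linarith
  -- `yhat` is nonnegative above index `k`
  have hy_nonneg : ∀ i, k ≤ i → i ≤ m → 0 ≤ yhat i := by
    intro i hki him
    induction i, hki using Nat.le_induction with
    | base => rw [hyk]
    | succ n hn ih =>
      have hnm : n < m := him
      have h1 := hB n hn hnm
      have h2 := hzinc n (hk1.trans hn) hnm
      have h3 := ih (Nat.le_of_lt hnm)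
      nlinarith
  -- per-constraint small ε feasibility
  have hstep : ∀ i : ℕ, ∃ e : ℝ, 0 < e ∧ ∀ ε : ℝ, 0 ≤ ε → ε ≤ e →
      (1 ≤ i → i < k → 0 ≤ (yhat (i + 1) + ε * d (i + 1)) - (yhat i + ε * d i)) ∧
      (k ≤ i → i < m →
        a * (z (i + 1) - z i) ≤ (yhat (i + 1) + ε * d (i + 1)) - (yhat i + ε * d i)) ∧
      (1 ≤ i → i < m →
        (yhat (i + 1) + ε * d (i + 1)) - (yhat i + ε * d i) ≤ b * (z (i + 1) - z i)) := by
    intro i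
    obtain ⟨e1, he1, H1⟩ : ∃ e : ℝ, 0 < e ∧ ∀ ε : ℝ, 0 ≤ ε → ε ≤ e →
        1 ≤ i → i < k → 0 ≤ (yhat (i + 1) - yhat i) + ε * (d (i + 1) - d i) := by
      by_cases h : 1 ≤ i ∧ i < k
      · obtain ⟨h1, h2⟩ := h
        have hside : yhat (i + 1) - yhat i = 0 → 0 ≤ d (i + 1) - d i := by
          intro h0
          have heq : yhat (i + 1) = yhat i := by linarith
          have hz := hzinc i h1 (lt_of_lt_of_le h2 hkm)
          simp only [hd, heq]
          linarith
        obtain ⟨e, he, H⟩ := aux_eps (yhat (i + 1) - yhat i) (d (i + 1) - d i) (hA i h1 h2) hside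
        exact ⟨e, he, fun ε hε hεe _ _ => H ε hε hεe⟩
      · exact ⟨1, one_pos, fun ε _ _ h1 h2 => absurd ⟨h1, h2⟩ h⟩
    obtain ⟨e2, he2, H2⟩ : ∃ e : ℝ, 0 < e ∧ ∀ ε : ℝ, 0 ≤ ε → ε ≤ e →
        k ≤ i → i < m →
        0 ≤ (yhat (i + 1) - yhat i - a * (z (i + 1) - z i)) + ε * (d (i + 1) - d i) := by
      by_cases h : k ≤ i ∧ i < m
      · obtain ⟨h1, h2⟩ := h
        have hz := hzinc i (hk1.trans h1) h2
        have hb := hB i h1 h2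
        have hside : yhat (i + 1) - yhat i - a * (z (i + 1) - z i) = 0 →
            0 ≤ d (i + 1) - d i := by
          intro h0
          have hyi : 0 ≤ yhat i := hy_nonneg i h1 (Nat.le_of_lt h2)
          have hyy : yhat i ≤ yhat (i + 1) := by nlinarith
          have hfle := hfa (yhat (i + 1)) (yhat i) hyi hyy
          have hq : (yhat (i + 1) - yhat i) / a = z (i + 1) - z i := by
            rw [div_eq_iff ha.ne']; linarith
          rw [hq] at hfle
          simp only [hd]
          linarith
        obtain ⟨e, he, H⟩ := aux_eps (yhat (i + 1) - yhat i - a * (z (i + 1) - z i))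
          (d (i + 1) - d i) (by linarith) hside
        exact ⟨e, he, fun ε hε hεe _ _ => H ε hε hεe⟩
      · exact ⟨1, one_pos, fun ε _ _ h1 h2 => absurd ⟨h1, h2⟩ h⟩
    obtain ⟨e3, he3, H3⟩ : ∃ e : ℝ, 0 < e ∧ ∀ ε : ℝ, 0 ≤ ε → ε ≤ e →
        1 ≤ i → i < m →
        0 ≤ (b * (z (i + 1) - z i) - (yhat (i + 1) - yhat i)) + ε * (-(d (i + 1) - d i)) := by
      by_cases h : 1 ≤ i ∧ i < m
      · obtain ⟨h1, h2⟩ := h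
        have hz := hzinc i h1 h2
        have hc := hC i h1 h2
        have hside : b * (z (i + 1) - z i) - (yhat (i + 1) - yhat i) = 0 →
            0 ≤ -(d (i + 1) - d i) := by
          intro h0
          have hyy : yhat i ≤ yhat (i + 1) := by nlinarith
          have hfge := hfb (yhat (i + 1)) (yhat i) hyy
          have hq : (yhat (i + 1) - yhat i) / b = z (i + 1) - z i := by
            rw [div_eq_iff hb0.ne']; linarith
          rw [hq] at hfge
          simp only [hd]
          linarith
        obtain ⟨e, he, H⟩ := aux_eps (b * (z (i + 1) - z i) - (yhat (i + 1) - yhat i))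
          (-(d (i + 1) - d i)) (by linarith) hside
        exact ⟨e, he, fun ε hε hεe _ _ => H ε hε hεe⟩
      · exact ⟨1, one_pos, fun ε _ _ h1 h2 => absurd ⟨h1, h2⟩ h⟩
    refine ⟨min e1 (min e2 e3), by positivity, fun ε hε hεe => ⟨?_, ?_, ?_⟩⟩
    · intro h1 h2
      have := H1 ε hε (hεe.trans (min_le_left _ _)) h1 h2
      linarith
    · intro h1 h2
      have := H2 ε hε (hεe.trans ((min_le_right _ _).trans (min_le_left _ _))) h1 h2
      linarith
    · intro h1 h2
      have := H3 ε hε (hεe.trans ((min_le_right _ _).trans (min_le_right _ _))) h1 h2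
      linarith
  choose E hEpos hE using hstep
  have hne : (Finset.Icc 1 m).Nonempty := ⟨1, by simp [hm1]⟩
  set ε₀ := (Finset.Icc 1 m).inf' hne E with hε₀
  have hε₀pos : 0 < ε₀ := by
    rw [hε₀, Finset.lt_inf'_iff]
    exact fun i _ => hEpos i
  have hfeasε : ∀ ε : ℝ, 0 ≤ ε → ε ≤ ε₀ →
      Feasible m k a b z (fun i => yhat i + ε * d i) := by
    intro ε hε hεe
    have hle : ∀ i, 1 ≤ i → i ≤ m → ε ≤ E i := fun i h1 h2 =>
      hεe.trans (Finset.inf'_le E (Finset.mem_Icc.mpr ⟨h1, h2⟩))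
    refine ⟨by simp [hyk, hdk], ?_, ?_, ?_⟩
    · intro i h1 h2
      exact (hE i ε hε (hle i h1 (le_trans (Nat.le_of_lt h2) hkm))).1 h1 h2
    · intro i h1 h2
      exact (hE i ε hε (hle i (hk1.trans h1) (Nat.le_of_lt h2))).2.1 h1 h2
    · intro i h1 h2
      exact (hE i ε hε (hle i h1 (Nat.le_of_lt h2))).2.2 h1 h2
  set S := ∑ i ∈ Finset.Icc 1 m, (yhat i - ystar i) * d i with hS
  set D := ∑ i ∈ Finset.Icc 1 m, (d i) ^ 2 with hD
  have hD0 : 0 ≤ D := Finset.sum_nonneg fun i _ => sq_nonneg _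
  have hkey : ∀ ε : ℝ, 0 ≤ ε → ε ≤ ε₀ → 0 ≤ 2 * ε * S + ε ^ 2 * D := by
    intro ε hε hεe
    have hm := hmin _ (hfeasε ε hε hεe)
    have hexp : ∑ i ∈ Finset.Icc 1 m, ((fun i => yhat i + ε * d i) i - ystar i) ^ 2
        = ∑ i ∈ Finset.Icc 1 m, (yhat i - ystar i) ^ 2 + (2 * ε * S + ε ^ 2 * D) := by
      rw [hS, hD, Finset.mul_sum, Finset.mul_sum, ← Finset.sum_add_distrib,
        ← Finset.sum_add_distrib]
      exact Finset.sum_congr rfl fun i _ => by ring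
    rw [hexp] at hm
    linarith
  have hSnn : 0 ≤ S := by
    by_contra hS0
    push_neg at hS0
    set ε := min ε₀ (-S / (D + 1)) with hεdef
    have hεpos : 0 < ε := lt_min hε₀pos (div_pos (by linarith) (by linarith))
    have h1 := hkey ε hεpos.le (min_le_left _ _)
    have h2 : ε ≤ -S / (D + 1) := min_le_right _ _
    have h3 : ε * (D + 1) ≤ -S := (le_div_iff₀ (by positivity)).mp h2
    nlinarith [mul_le_mul_of_nonneg_left h3 hεpos.le, mul_pos hεpos hεpos,
      mul_neg_of_pos_of_neg hεpos hS0]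
  exact hSnn
end
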